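/- Let k ≥ 1 be an integer and let g : ℋ(−2) → ℂ be analytic. Suppose there are real numbers ε and C with 0 < ε < 1 and C > 0 such that |g(z)| ≤ C^{Re(z) + ε·|z|} for all z ∈ ℋ(−2), and such that C^{1+ε} < e^{γ_k} + 1. Then there exists a real C⋆ with 0 < C⋆ < e^{γ_k} such that |Δ^{n} g(0)| ≤ C⋆^{n} for all sufficiently large n. -/

import Mathlib

set_option maxHeartbeats 1000000

/-- Forward difference operator on functions `ℂ → ℂ`: `Δ g z = g (z+1) - g z`. -/
noncomputable def cfwdD (g : ℂ → ℂ) : ℂ → ℂ := fun z => g (z + 1) - g z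

/-- The `k`-th harmonic number `γ_k = ∑_{j=1}^{k} 1/j`. -/
noncomputable def harmonic' (k : ℕ) : ℝ := ∑ j ∈ Finset.Icc 1 k, (1 : ℝ) / j


open Nat Real in
lemma aux_sinh (t : ℝ) (h0 : 0 < t) (h1 : t ≤ 1) : t * (- Real.log t) ≤ (1 - t ^ 2) / 2 := by
  have hs : 0 ≤ - Real.log t := by
    simpa using Real.log_nonpos h0.le h1
  have h2 : (- Real.log t) ≤ Real.sinh (- Real.log t) := Real.self_le_sinh_iff.mpr hs
  rw [Real.sinh_eq] at h2
  have he1 : Real.exp (- Real.log t) = t⁻¹ := by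
    rw [Real.exp_neg, Real.exp_log h0]
  have he2 : Real.exp (- - Real.log t) = t := by
    rw [neg_neg, Real.exp_log h0]
  rw [he1, he2] at h2
  have := mul_le_mul_of_nonneg_left h2 h0.le
  calc t * (- Real.log t) ≤ t * ((t⁻¹ - t) / 2) := this
    _ = (1 - t ^ 2) / 2 := by field_simp

open Nat Real in
lemma aux_PW (t mh x y : ℝ) (ht0 : 0 ≤ t) (ht1 : t ≤ 1) (hm : 1 / 4 ≤ mh)
    (hx : 0 < x) (hy : 0 < y) :
    (2 - (t + t ^ 2)) * (Real.log x - mh) + (t + t ^ 2) * Real.log y ≤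
      Real.log (t ^ 2 * y ^ 2 + (1 - t ^ 2) * x ^ 2) := by
  set κ : ℝ := 2 - (t + t ^ 2) with hκ
  have hκ0 : 0 ≤ κ := by nlinarith
  have hmh0 : (0:ℝ) < mh := by linarith
  have ht2 : 0 ≤ 1 - t ^ 2 := by nlinarith
  have hsum_pos : 0 < t ^ 2 * y ^ 2 + (1 - t ^ 2) * x ^ 2 := by
    rcases le_total (x ^ 2) (y ^ 2) with h | h
    · nlinarith [mul_pos hx hx, sq_nonneg t]
    · nlinarith [mul_pos hy hy, sq_nonneg t]
  by_cases hc : - (κ * mh) ≤ (t - t ^ 2) * (Real.log x - Real.log y)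
  · -- AM-GM case
    have ham := Real.geom_mean_le_arith_mean2_weighted (sq_nonneg t)
      ht2 (sq_nonneg y) (sq_nonneg x) (by ring)
    have hlog := Real.log_le_log (by positivity) ham
    rw [Real.log_mul (by positivity) (by positivity), Real.log_rpow (by positivity),
      Real.log_rpow (by positivity)] at hlog
    rw [Real.log_pow, Real.log_pow] at hlog
    push_cast at hlog
    have hid : κ * Real.log x + (t + t ^ 2) * Real.log y
        = t ^ 2 * (2 * Real.log y) + (1 - t ^ 2) * (2 * Real.log x)
          - (t - t ^ 2) * (Real.log x - Real.log y) := by rw [hκ]; ring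
    have hgoal_eq : κ * (Real.log x - mh) = κ * Real.log x - κ * mh := by ring
    rw [hgoal_eq]
    linarith [hc, hlog, hid]
  · push_neg at hc
    have h2 : 0 ≤ t - t ^ 2 := by nlinarith
    have htt : 0 < t - t ^ 2 := by
      rcases h2.lt_or_eq with h | h
      · exact h
      · exfalso
        rw [← h, zero_mul] at hc
        have hκpos : 0 < κ := by nlinarith [h]
        nlinarith [mul_pos hκpos hmh0]
    have ht0' : 0 < t := by nlinarith
    have ht1' : t < 1 := by nlinarith
    have hκpos : 0 < κ := by nlinarith
    have hlb : Real.log (t ^ 2 * y ^ 2) ≤ Real.log (t ^ 2 * y ^ 2 + (1 - t ^ 2) * x ^ 2) := by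
      apply Real.log_le_log (by positivity)
      nlinarith [mul_pos hx hx]
    have hlog_ty : Real.log (t ^ 2 * y ^ 2) = 2 * Real.log t + 2 * Real.log y := by
      rw [Real.log_mul (by positivity) (by positivity), Real.log_pow, Real.log_pow]
      push_cast; ring
    have hsinh := aux_sinh t ht0' ht1'.le
    -- step 1 : multiply hc by κ ≥ 0
    have s1 : κ * ((t - t ^ 2) * (Real.log x - Real.log y)) ≤ κ * (- (κ * mh)) :=
      mul_le_mul_of_nonneg_left hc.le hκ0
    -- step 2 : - κ mh (2 - 2 t²) ≤ 2 log t * (t - t²)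
    have s2 : - (κ * mh * (2 - 2 * t ^ 2)) ≤ 2 * Real.log t * (t - t ^ 2) := by
      have hκform : κ = (1 - t) * (2 + t) := by rw [hκ]; ring
      have e1 : 2 * Real.log t * (t - t ^ 2) = - (2 * (1 - t) * (t * (- Real.log t))) := by ring
      have e2 : t * (- Real.log t) * (2 * (1 - t)) ≤ (1 - t ^ 2) / 2 * (2 * (1 - t)) :=
        mul_le_mul_of_nonneg_right hsinh (by nlinarith)
      have ha : (0:ℝ) ≤ (1 - t) * (1 - t ^ 2) := mul_nonneg (by linarith) ht2
      have hb : (0:ℝ) ≤ 2 * mh * (2 + t) - 1 := by nlinarith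
      have hprod : (0:ℝ) ≤ ((1 - t) * (1 - t ^ 2)) * (2 * mh * (2 + t) - 1) := mul_nonneg ha hb
      have e3 : (1 - t ^ 2) / 2 * (2 * (1 - t)) ≤ κ * mh * (2 - 2 * t ^ 2) := by
        rw [hκform]
        ring_nf at hprod ⊢
        linarith [hprod]
      rw [e1]
      ring_nf at e2 e3 ⊢
      linarith [e2, e3]
    -- step 3 : divide by (t - t²)
    have key : κ * (Real.log x - Real.log y) - κ * mh ≤ 2 * Real.log t := by
      have s3 : (κ * (Real.log x - Real.log y) - κ * mh) * (t - t ^ 2)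
          ≤ (2 * Real.log t) * (t - t ^ 2) := by
        have expand : (κ * (Real.log x - Real.log y) - κ * mh) * (t - t ^ 2)
            = κ * ((t - t ^ 2) * (Real.log x - Real.log y)) - κ * mh * (t - t ^ 2) := by ring
        have mid : κ * (- (κ * mh)) - κ * mh * (t - t ^ 2) = - (κ * mh * (2 - 2 * t ^ 2)) := by
          rw [hκ]; ring
        rw [expand]
        calc κ * ((t - t ^ 2) * (Real.log x - Real.log y)) - κ * mh * (t - t ^ 2)
            ≤ κ * (- (κ * mh)) - κ * mh * (t - t ^ 2) := by linarith [s1]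
          _ = - (κ * mh * (2 - 2 * t ^ 2)) := mid
          _ ≤ (2 * Real.log t) * (t - t ^ 2) := s2
      exact le_of_mul_le_mul_right s3 htt
    calc (2 - (t + t ^ 2)) * (Real.log x - mh) + (t + t ^ 2) * Real.log y
        = (κ * (Real.log x - Real.log y) - κ * mh) + 2 * Real.log y := by rw [hκ]; ring
      _ ≤ 2 * Real.log t + 2 * Real.log y := by linarith [key]
      _ = Real.log (t ^ 2 * y ^ 2) := hlog_ty.symm
      _ ≤ _ := hlb

open Nat Real Finset Metric in
lemma aux_log_factorial_le (n : ℕ) :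
    Real.log (n !) ≤ (n + 1) * Real.log (n + 1) - n := by
  have h1 : Real.log (n !) = ∑ i ∈ Finset.range n, Real.log (1 + i) := by
    rw [← Finset.prod_range_add_one_eq_factorial n]
    push_cast
    rw [Real.log_prod]
    · exact Finset.sum_congr rfl fun i _ => by rw [add_comm]
    · intro i _
      positivity
  have hmono : MonotoneOn Real.log (Set.Icc (1 : ℝ) (1 + n)) := by
    intro x hx y hy hxy
    exact Real.log_le_log (by linarith [hx.1]) hxy
  have h2 := hmono.sum_le_integral
  have h3 : ∫ x in (1 : ℝ)..(1 + n), Real.log x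
      = (1 + n) * Real.log (1 + n) - (1 + n) - (1 * Real.log 1 - 1) := by
    rw [integral_log]
    ring
  rw [h1]
  rw [h3] at h2
  simp only [Real.log_one] at h2
  have : (1 : ℝ) + n = n + 1 := by ring
  rw [this] at h2
  linarith [h2]

open Nat Real Finset Metric in
lemma aux_sum_log_succ_ge (n : ℕ) :
    (n + 1) * Real.log (n + 1) - n ≤ ∑ j ∈ Finset.range (n + 1), Real.log (j + 1) := by
  have hmono : MonotoneOn Real.log (Set.Icc (1 : ℝ) (1 + n)) := by
    intro x hx y hy hxy
    exact Real.log_le_log (by linarith [hx.1]) hxy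
  have h2 := hmono.integral_le_sum
  have h3 : ∫ x in (1 : ℝ)..(1 + n), Real.log x
      = (1 + n) * Real.log (1 + n) - (1 + n) - (1 * Real.log 1 - 1) := by
    rw [integral_log]
    ring
  rw [h3] at h2
  simp only [Real.log_one] at h2
  have h4 : ∑ j ∈ Finset.range (n + 1), Real.log (j + 1)
      = ∑ i ∈ Finset.range n, Real.log (1 + (i + 1 : ℕ)) + Real.log (0 + 1) := by
    rw [Finset.sum_range_succ']
    push_cast
    refine congrArg₂ _ (Finset.sum_congr rfl fun i _ => by push_cast; ring_nf) ?_
    norm_num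
  rw [h4]
  have h5 : Real.log (0+1) = 0 := by norm_num




  rw [h5, add_zero]
  have : (1 : ℝ) + n = n + 1 := by ring
  rw [this] at h2
  linarith [h2]

open Nat Real Finset Metric in
lemma aux_sum_log_left (U : ℝ) (n : ℕ) (hU : (n + 1 : ℝ) < U) :
    U * Real.log U - (U - (n + 1)) * Real.log (U - (n + 1)) - (n + 1) ≤
      ∑ j ∈ Finset.range (n + 1), Real.log (U - j) := by
  have hanti : AntitoneOn (fun x : ℝ => Real.log (U - x)) (Set.Icc (0 : ℝ) (0 + (n + 1 : ℕ))) := by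
    intro x hx y hy hxy
    have h1 : 0 < U - y := by
      push_cast at hy
      have := hy.2
      linarith
    exact Real.log_le_log h1 (by linarith)
  have h2 := hanti.integral_le_sum
  have h3 : ∫ x in (0 : ℝ)..(0 + (n + 1 : ℕ)), Real.log (U - x)
      = U * Real.log U - (U - (n + 1)) * Real.log (U - (n + 1)) - (n + 1) := by
    rw [intervalIntegral.integral_comp_sub_left (fun x => Real.log x) U]
    push_cast
    rw [integral_log]
    ring_nf
  rw [h3] at h2
  refine h2.trans_eq ?_
  refine Finset.sum_congr rfl fun i _ => ?_
  norm_num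

open Nat Finset fwdDiff in
lemma aux_alg (n : ℕ) (v : ℂ) (h : ∀ j ∈ Finset.range (n + 2), v - (j : ℂ) ≠ 0) :
    (n ! : ℂ) / ∏ j ∈ Finset.range (n + 1), (v - 1 - (j : ℂ))
      - (n ! : ℂ) / ∏ j ∈ Finset.range (n + 1), (v - (j : ℂ))
    = ((n + 1)! : ℂ) / ∏ j ∈ Finset.range (n + 2), (v - (j : ℂ)) := by
  set A := ∏ j ∈ Finset.range (n + 1), (v - 1 - (j : ℂ)) with hA
  set B := ∏ j ∈ Finset.range (n + 1), (v - (j : ℂ)) with hB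
  set P := ∏ j ∈ Finset.range (n + 2), (v - (j : ℂ)) with hP
  have hP0 : P ≠ 0 := Finset.prod_ne_zero_iff.mpr fun j hj => h j hj
  have hAv : A * v = P := by
    rw [hP, Finset.prod_range_succ' (fun j => (v - (j : ℂ))) (n + 1), hA]
    have : ∀ j ∈ Finset.range (n+1), (v - 1 - (j:ℂ)) = (v - ((j:ℕ)+1 : ℕ)) := by
      intro j hj; push_cast; ring
    rw [Finset.prod_congr rfl this]
    push_cast
    ring
  have hBv : B * (v - (n + 1 : ℕ)) = P := by
    rw [hP, Finset.prod_range_succ (fun j => (v - (j : ℂ))) (n + 1), hB]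
  have hA0 : A ≠ 0 := fun hc => hP0 (by rw [← hAv, hc, zero_mul])
  have hB0 : B ≠ 0 := fun hc => hP0 (by rw [← hBv, hc, zero_mul])
  rw [div_sub_div _ _ hA0 hB0, div_eq_div_iff (mul_ne_zero hA0 hB0) hP0]
  have hfact : ((n + 1)! : ℂ) = (n ! : ℂ) * (n + 1 : ℕ) := by
    rw [Nat.factorial_succ]; push_cast; ring
  rw [hfact]
  push_cast at hAv hBv ⊢
  linear_combination ((n ! : ℂ) * A) * hBv - ((n ! : ℂ) * B) * hAv

open Nat Finset fwdDiff in
lemma fwdDiff_iter_sub' (f g : ℂ → ℂ) (n : ℕ) :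
    (fwdDiff (1:ℂ))^[n] (f - g) = (fwdDiff (1:ℂ))^[n] f - (fwdDiff (1:ℂ))^[n] g := by
  have h := map_sub (fwdDiff_aux.fwdDiffₗ ℂ ℂ (1:ℂ) ^ n) f g
  simpa only [fwdDiff_aux.coe_fwdDiffₗ_pow] using h

open Nat Finset fwdDiff in
lemma aux_kernel (n : ℕ) : ∀ z : ℂ, (∀ j ∈ Finset.range (n + 1), z - (j : ℂ) ≠ 0) →
    (fwdDiff (1 : ℂ))^[n] (fun w => (z - w)⁻¹) 0
      = (n ! : ℂ) / ∏ j ∈ Finset.range (n + 1), (z - (j : ℂ)) := by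
  induction n with
  | zero =>
    intro z hz
    simp only [Function.iterate_zero, id_eq, Finset.range_one, Finset.prod_singleton,
      Nat.factorial_zero, Nat.cast_zero, Nat.cast_one]
    rw [one_div]
    norm_num
  | succ n ih =>
    intro z hz
    have hstep : fwdDiff (1 : ℂ) (fun w => (z - w)⁻¹)
        = (fun w => ((z - 1) - w)⁻¹) - (fun w => (z - w)⁻¹) := by
      funext w
      show (z - (w + 1))⁻¹ - (z - w)⁻¹ = _
      have h1 : z - (w + 1) = (z - 1) - w := by ring
      rw [h1]
      rfl
    rw [Function.iterate_succ_apply, hstep, fwdDiff_iter_sub']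
    have hz' : ∀ j ∈ Finset.range (n + 1), z - 1 - (j : ℂ) ≠ 0 := by
      intro j hj
      have h := hz (j + 1) (Finset.mem_range.mpr (by have := Finset.mem_range.mp hj; omega))
      intro hcon
      apply h
      push_cast at hcon ⊢
      linear_combination hcon
    have hz'' : ∀ j ∈ Finset.range (n + 1), z - (j : ℂ) ≠ 0 := fun j hj =>
      hz j (Finset.mem_range.mpr (by have := Finset.mem_range.mp hj; omega))
    rw [Pi.sub_apply]
    rw [ih (z - 1) hz', ih z hz'']
    have := aux_alg n z hz
    push_cast at this ⊢
    convert this using 3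

open Nat Finset fwdDiff in
lemma aux_shift_sum (f : ℂ → ℂ) (n : ℕ) :
    (fwdDiff (1 : ℂ))^[n] f 0 = ∑ j ∈ Finset.range (n + 1),
      ((-1 : ℂ)) ^ (n - j) * (n.choose j : ℂ) * f j := by
  rw [fwdDiff_iter_eq_sum_shift]
  refine Finset.sum_congr rfl fun j hj => ?_
  have h1 : (0 : ℂ) + j • (1 : ℂ) = (j : ℂ) := by
    simp
  rw [h1, zsmul_eq_mul]
  push_cast
  ring

open Nat Finset fwdDiff in
lemma aux_sum_formula (g : ℂ → ℂ) (n : ℕ) :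
    cfwdD^[n] g 0 = ∑ j ∈ Finset.range (n + 1),
      ((-1 : ℂ)) ^ (n - j) * (n.choose j : ℂ) * g j := by
  have h : cfwdD = fwdDiff (1 : ℂ) := rfl
  rw [h, aux_shift_sum]

open Nat Finset fwdDiff in
lemma aux_PF (n : ℕ) (z : ℂ) (hz : ∀ j ∈ Finset.range (n + 1), z - (j : ℂ) ≠ 0) :
    ∑ j ∈ Finset.range (n + 1), ((-1 : ℂ)) ^ (n - j) * (n.choose j : ℂ) * (z - (j : ℂ))⁻¹
      = (n ! : ℂ) / ∏ j ∈ Finset.range (n + 1), (z - (j : ℂ)) := by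
  rw [← aux_shift_sum (fun w => (z - w)⁻¹) n, aux_kernel n z hz]

open Nat Real Finset Metric Complex in
lemma aux_rep (g : ℂ → ℂ) (c₀ R : ℝ) (hR : 0 < R)
    (hg : DifferentiableOn ℂ g {z : ℂ | -2 < z.re})
    (hsub : Metric.closedBall ((c₀ : ℝ) : ℂ) R ⊆ {z : ℂ | -2 < z.re})
    (n : ℕ) (hj : ∀ j ∈ Finset.range (n + 1), ((j : ℕ) : ℂ) ∈ Metric.ball ((c₀ : ℝ) : ℂ) R)
    (M : ℝ)
    (hM : ∀ z ∈ Metric.sphere ((c₀ : ℝ) : ℂ) R,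
      (n ! : ℝ) * ‖g z‖ ≤ M * ∏ j ∈ Finset.range (n + 1), ‖z - j‖) :
    ‖cfwdD^[n] g 0‖ ≤ R * M := by
  set c : ℂ := ((c₀ : ℝ) : ℂ) with hc
  have hcont : ContinuousOn g (Metric.closedBall c R) := (hg.mono hsub).continuousOn
  have hopen : IsOpen {z : ℂ | -2 < z.re} := isOpen_lt continuous_const Complex.continuous_re
  have hdiff : ∀ x ∈ Metric.ball c R \ (∅ : Set ℂ), DifferentiableAt ℂ g x := by
    intro x hx
    exact (hg.differentiableAt (hopen.mem_nhds
      (hsub (Metric.ball_subset_closedBall hx.1))))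
  -- Cauchy formula for each node
  have hcauchy : ∀ j ∈ Finset.range (n + 1),
      (2 * Real.pi * Complex.I : ℂ)⁻¹ • (∮ z in C(c, R), (z - (j : ℂ))⁻¹ • g z) = g j := by
    intro j hjm
    exact Complex.two_pi_I_inv_smul_circleIntegral_sub_inv_smul_of_differentiable_on_off_countable
      Set.countable_empty (hj j hjm) hcont hdiff
  -- the combined kernel
  set F : ℂ → ℂ := fun z => ∑ j ∈ Finset.range (n + 1),
      (((-1 : ℂ)) ^ (n - j) * (n.choose j : ℂ)) • ((z - (j : ℂ))⁻¹ • g z) with hF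
  have hne : ∀ z ∈ Metric.sphere c R, ∀ j ∈ Finset.range (n + 1), z - (j : ℂ) ≠ 0 := by
    intro z hzs j hjm
    have hzj : z ≠ (j : ℂ) := by
      intro hcon
      have h1 := hj j hjm
      rw [← hcon] at h1
      rw [Metric.mem_ball, Metric.mem_sphere.mp hzs] at h1
      exact lt_irrefl _ h1
    exact sub_ne_zero.mpr hzj
  have hint : ∀ j ∈ Finset.range (n + 1), CircleIntegrable
      (fun z => (((-1 : ℂ)) ^ (n - j) * (n.choose j : ℂ)) • ((z - (j : ℂ))⁻¹ • g z)) c R := by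
    intro j hjm
    apply ContinuousOn.circleIntegrable hR.le
    apply ContinuousOn.fun_smul continuousOn_const
    apply ContinuousOn.fun_smul
    · exact ((continuousOn_id.sub continuousOn_const).inv₀
        (fun z hz => hne z hz j hjm))
    · exact hcont.mono Metric.sphere_subset_closedBall
  have hsplit : (∮ z in C(c, R), F z) = ∑ j ∈ Finset.range (n + 1),
      ∮ z in C(c, R), (((-1 : ℂ)) ^ (n - j) * (n.choose j : ℂ)) • ((z - (j : ℂ))⁻¹ • g z) := by
    simp only [circleIntegral]
    rw [← intervalIntegral.integral_finset_sum (fun j hjm => (hint j hjm).out)]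
    refine intervalIntegral.integral_congr fun θ _ => ?_
    rw [hF]
    rw [Finset.smul_sum]
  have hval : (2 * Real.pi * Complex.I : ℂ)⁻¹ • (∮ z in C(c, R), F z) = cfwdD^[n] g 0 := by
    rw [hsplit, Finset.smul_sum, aux_sum_formula]
    refine Finset.sum_congr rfl fun j hjm => ?_
    rw [circleIntegral.integral_smul, smul_comm, hcauchy j hjm, smul_eq_mul]
  rw [← hval]
  apply circleIntegral.norm_two_pi_i_inv_smul_integral_le_of_norm_le_const hR.le
  intro z hzs
  have hprod_pos : (0:ℝ) < ∏ j ∈ Finset.range (n + 1), ‖z - j‖ := by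
    apply Finset.prod_pos
    intro j hjm
    exact norm_pos_iff.mpr (hne z hzs j hjm)
  have hFz : F z = ((n ! : ℂ) / ∏ j ∈ Finset.range (n + 1), (z - (j : ℂ))) * g z := by
    rw [hF, ← aux_PF n z (hne z hzs)]
    rw [Finset.sum_mul]
    refine Finset.sum_congr rfl fun j hjm => ?_
    rw [smul_eq_mul, smul_eq_mul]
    ring
  rw [hFz, norm_mul, norm_div, norm_prod]
  rw [Complex.norm_natCast]
  rw [div_mul_eq_mul_div, div_le_iff₀ hprod_pos]
  exact hM z hzs

open Nat Real Finset Metric in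
lemma aux_core (L U mh : ℝ) (n : ℕ) (hL : 0 ≤ L) (hm : 1 / 4 ≤ mh) (hU : (n : ℝ) + 1 < U)
    (z : ℂ) (hz : z ∈ Metric.sphere ((((U - 1) / 2 : ℝ)) : ℂ) ((U + 1) / 2)) :
    ∃ Λ : ℝ, 0 ≤ Λ ∧ Λ ≤ 1 ∧
      Real.log (n !) + (L / 2) * (z.re + ‖z‖) ≤
        (n + 1) * mh
        + Λ * (((n + 1) * Real.log (n + 1) - n) + L * (U + 1)
            - (U * Real.log U - (U - (n + 1)) * Real.log (U - (n + 1)) - (n + 1)) - (n + 1) * mh)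
        + ∑ j ∈ Finset.range (n + 1), Real.log (‖z - j‖) := by
  have hcastn : (0:ℝ) ≤ (n:ℝ) := Nat.cast_nonneg n
  have hU1 : (1 : ℝ) < U := by linarith
  have hcirc : (z.re - (U - 1) / 2) ^ 2 + z.im ^ 2 = ((U + 1) / 2) ^ 2 := by
    have h1 : ‖z - (((U - 1) / 2 : ℝ) : ℂ)‖ = (U + 1) / 2 := by
      rw [mem_sphere_iff_norm] at hz
      exact hz
    have h2 := congrArg (fun x : ℝ => x ^ 2) h1
    rw [Complex.sq_norm, Complex.normSq_apply] at h2
    simp only [Complex.sub_re, Complex.sub_im, Complex.ofReal_re, Complex.ofReal_im,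
      sub_zero] at h2
    rw [← h2]
    ring
  have hσu : z.re ≤ U := by nlinarith [hcirc, sq_nonneg z.im]
  have hσl : -1 ≤ z.re := by nlinarith [hcirc, sq_nonneg z.im]
  have h2 : (z.re + 1) ^ 2 + z.im ^ 2 = (U + 1) * (z.re + 1) := by nlinarith [hcirc]
  have ha : (0:ℝ) < U + 1 := by linarith
  set t : ℝ := Real.sqrt ((z.re + 1) / (U + 1)) with ht_def
  have ht0 : 0 ≤ t := Real.sqrt_nonneg _
  have ht2 : t ^ 2 = (z.re + 1) / (U + 1) :=
    Real.sq_sqrt (div_nonneg (by linarith) (by linarith))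
  have hre : z.re + 1 = (U + 1) * t ^ 2 := by
    rw [ht2]
    field_simp
  have ht1 : t ≤ 1 := by
    have h3 : t ^ 2 ≤ 1 := by
      rw [ht2, div_le_one ha]
      linarith
    nlinarith
  have him : z.im ^ 2 = (U + 1) ^ 2 * t ^ 2 - (U + 1) ^ 2 * t ^ 4 := by nlinarith [h2, hre]
  have hzre : z.re = (U + 1) * t ^ 2 - 1 := by linarith [hre]
  have hs : ‖z + 1‖ = (U + 1) * t := by
    rw [Complex.norm_def, Complex.normSq_apply]
    simp only [Complex.add_re, Complex.add_im, Complex.one_re, Complex.one_im, add_zero]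
    have heq : (z.re + 1) * (z.re + 1) + z.im * z.im = ((U + 1) * t) ^ 2 := by
      nlinarith [h2, hre]
    rw [heq]
    exact Real.sqrt_sq (by positivity)
  set Λ : ℝ := (t + t ^ 2) / 2 with hΛ_def
  have hΛ0 : 0 ≤ Λ := by positivity
  have hΛ1 : Λ ≤ 1 := by rw [hΛ_def]; nlinarith
  refine ⟨Λ, hΛ0, hΛ1, ?_⟩
  have habsz : ‖z‖ ≤ (U + 1) * t + 1 := by
    have h3 : ‖z‖ = ‖(z + 1) + (-1)‖ := by norm_num
    rw [h3]
    calc ‖(z + 1) + (-1)‖ ≤ ‖z + 1‖ + ‖-1‖ :=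
          norm_add_le _ _
      _ = (U + 1) * t + 1 := by rw [hs]; simp
  have stepA : (L / 2) * (z.re + ‖z‖) ≤ Λ * (L * (U + 1)) := by
    have h4 : z.re + ‖z‖ ≤ 2 * Λ * (U + 1) := by
      rw [hΛ_def, hzre]
      nlinarith [habsz]
    have h5 := mul_le_mul_of_nonneg_left h4 (by linarith : (0:ℝ) ≤ L / 2)
    calc (L / 2) * (z.re + ‖z‖) ≤ (L / 2) * (2 * Λ * (U + 1)) := h5
      _ = Λ * (L * (U + 1)) := by ring
  have stepB : ∀ j ∈ Finset.range (n + 1),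
      Λ * Real.log (U - j) + (1 - Λ) * (Real.log ((j : ℝ) + 1) - mh) ≤
        Real.log (‖z - j‖) := by
    intro j hjm
    have hjn : (j : ℝ) ≤ n := by
      exact_mod_cast Nat.lt_succ_iff.mp (Finset.mem_range.mp hjm)
    have hY : (0:ℝ) < U - j := by linarith
    have hX : (0:ℝ) < (j : ℝ) + 1 := by positivity
    have habs2 : (‖z - j‖) ^ 2
        = t ^ 2 * (U - j) ^ 2 + (1 - t ^ 2) * ((j : ℝ) + 1) ^ 2 := by
      rw [Complex.sq_norm, Complex.normSq_apply]
      simp only [Complex.sub_re, Complex.sub_im, Complex.natCast_re, Complex.natCast_im, sub_zero]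
      nlinarith [hzre, him]
    have hpos2 : (0:ℝ) < t ^ 2 * (U - j) ^ 2 + (1 - t ^ 2) * ((j : ℝ) + 1) ^ 2 := by
      rcases le_total (((j : ℝ) + 1) ^ 2) ((U - j) ^ 2) with h | h
      · nlinarith [mul_pos hX hX, sq_nonneg t]
      · nlinarith [mul_pos hY hY, sq_nonneg t]
    have habs_pos : 0 < ‖z - j‖ := by
      by_contra hcon
      push_neg at hcon
      have h0 : ‖z - j‖ = 0 :=
        le_antisymm hcon (norm_nonneg _)
      rw [h0] at habs2
      nlinarith [habs2, hpos2]
    have hPW := aux_PW t mh ((j : ℝ) + 1) (U - j) ht0 ht1 hm hX hY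
    rw [← habs2] at hPW
    have hlog2 : Real.log ((‖z - j‖) ^ 2) = 2 * Real.log (‖z - j‖) := by
      rw [Real.log_pow]
      push_cast
      ring
    rw [hlog2] at hPW
    rw [hΛ_def]
    linarith [hPW]
  have stepC : Λ * (∑ j ∈ Finset.range (n + 1), Real.log (U - j))
      + (1 - Λ) * ((∑ j ∈ Finset.range (n + 1), Real.log ((j : ℝ) + 1)) - (n + 1) * mh)
      ≤ ∑ j ∈ Finset.range (n + 1), Real.log (‖z - j‖) := by
    have h6 := Finset.sum_le_sum stepB
    refine le_trans (le_of_eq ?_) h6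
    rw [Finset.sum_add_distrib, ← Finset.mul_sum]
    congr 1
    have h7 : ∀ j ∈ Finset.range (n + 1),
        (1 - Λ) * (Real.log ((j : ℝ) + 1) - mh)
          = (1 - Λ) * Real.log ((j : ℝ) + 1) - (1 - Λ) * mh := fun j _ => by ring
    rw [Finset.sum_congr rfl h7, Finset.sum_sub_distrib, ← Finset.mul_sum, Finset.sum_const,
      Finset.card_range]
    push_cast
    ring
  -- final assembly
  have hSU := aux_sum_log_left U n hU
  have hSX := aux_sum_log_succ_ge n
  have hA1 := mul_le_mul_of_nonneg_left hSU hΛ0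
  have hA2 := mul_le_mul_of_nonneg_left hSX (by linarith : (0:ℝ) ≤ 1 - Λ)
  have hF := aux_log_factorial_le n
  nlinarith [stepA, stepC, hA1, hA2, hF]

open Nat Real Finset in
lemma aux_QII_num : 3 * Real.log (23 / 10) + 2 * Real.log 2 - 3 * Real.log 3 ≤ 3 / 5 := by
  have h1 : Real.log ((23 / 10 : ℝ) ^ 3 * 2 ^ 2 / 3 ^ 3)
      = 3 * Real.log (23 / 10) + 2 * Real.log 2 - 3 * Real.log 3 := by
    rw [Real.log_div (by norm_num) (by norm_num), Real.log_mul (by norm_num) (by norm_num),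
      Real.log_pow, Real.log_pow, Real.log_pow]
    push_cast
    ring
  rw [← h1]
  have h2 : ((23 / 10 : ℝ) ^ 3 * 2 ^ 2 / 3 ^ 3) = (48668 / 27000 : ℝ) := by norm_num
  rw [h2]
  rw [Real.log_le_iff_le_exp (by norm_num)]
  have h3 : ((48668 / 27000 : ℝ)) ^ 5 ≤ (Real.exp (3 / 5)) ^ 5 := by
    have h4 : (Real.exp (3 / 5)) ^ 5 = Real.exp 3 := by
      rw [← Real.exp_nat_mul]
      norm_num
    rw [h4]
    have h5 : Real.exp 3 = (Real.exp 1) ^ 3 := by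
      rw [← Real.exp_nat_mul]
      norm_num
    rw [h5]
    have h6 := Real.exp_one_gt_d9
    have h7 : (2.7182818 : ℝ) ^ 3 ≤ (Real.exp 1) ^ 3 := by
      apply pow_le_pow_left₀ (by norm_num)
      linarith
    have h8 : ((48668 / 27000 : ℝ)) ^ 5 ≤ (2.7182818 : ℝ) ^ 3 := by norm_num
    linarith
  exact le_of_pow_le_pow_left₀ (by norm_num) (Real.exp_pos _).le h3

open Nat Real Finset in
lemma aux_log_np1 (n : ℕ) (hn : 1 ≤ n) :
    ((n : ℝ) + 1) * Real.log ((n : ℝ) + 1) ≤ n * Real.log n + Real.log n + 2 := by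
  have hn1 : (1:ℝ) ≤ n := by exact_mod_cast hn
  have hnpos : (0:ℝ) < n := by linarith
  have h1 : Real.log ((n:ℝ) + 1) ≤ Real.log n + 1 / n := by
    have h2 : Real.log ((n:ℝ) + 1) = Real.log n + Real.log (((n:ℝ) + 1) / n) := by
      rw [← Real.log_mul (by positivity) (by positivity)]
      congr 1
      field_simp
    rw [h2]
    have h3 : Real.log (((n:ℝ) + 1) / n) ≤ ((n:ℝ) + 1) / n - 1 :=
      Real.log_le_sub_one_of_pos (by positivity)
    have h4 : ((n:ℝ) + 1) / n - 1 = 1 / n := by field_simp; ring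
    linarith [h3, h4.le]
  have h5 := mul_le_mul_of_nonneg_left h1 (by positivity : (0:ℝ) ≤ (n:ℝ) + 1)
  have h6 : ((n:ℝ) + 1) * (Real.log n + 1 / n) = n * Real.log n + Real.log n + ((n:ℝ)+1)/n := by
    field_simp
  have h7 : ((n:ℝ) + 1) / n ≤ 2 := by
    rw [div_le_iff₀ hnpos]
    linarith
  nlinarith [h5]

open Nat Real Finset in
lemma aux_QII (B : ℝ) (n : ℕ) (hB1 : 1 ≤ B) (hB : B ≤ 23 / 10) (hn : 1 ≤ n) :
    (((n : ℝ) + 1) * Real.log ((n : ℝ) + 1) - n) + Real.log B * (3 * (n : ℝ) + 1)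
      - ((3 * (n : ℝ)) * Real.log (3 * (n : ℝ))
          - (3 * (n : ℝ) - ((n : ℝ) + 1)) * Real.log (3 * (n : ℝ) - ((n : ℝ) + 1))
          - ((n : ℝ) + 1))
      - ((n : ℝ) + 1) * (1 / 4) ≤ (7 / 20) * n + Real.log B + 3 := by
  have hn1 : (1:ℝ) ≤ n := by exact_mod_cast hn
  have hnpos : (0:ℝ) < n := by linarith
  have hL0 : 0 ≤ Real.log B := Real.log_nonneg hB1
  have hL23 : Real.log B ≤ Real.log (23 / 10) := Real.log_le_log (by linarith) hB
  have hW : 3 * (n:ℝ) - ((n:ℝ) + 1) = 2 * n - 1 := by ring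
  rw [hW]
  have hlog3n : Real.log (3 * (n:ℝ)) = Real.log 3 + Real.log n :=
    Real.log_mul (by norm_num) (by positivity)
  rw [hlog3n]
  have hwpos : (0:ℝ) < 2 * n - 1 := by linarith
  have e4 : (2 * (n:ℝ) - 1) * Real.log (2 * n - 1)
      ≤ 2 * n * Real.log 2 + 2 * n * Real.log n - Real.log 2 - Real.log n := by
    have h1 : Real.log (2 * (n:ℝ) - 1) ≤ Real.log (2 * n) :=
      Real.log_le_log hwpos (by linarith)
    rw [Real.log_mul (by norm_num) (by positivity)] at h1
    have h2 := mul_le_mul_of_nonneg_left h1 hwpos.le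
    nlinarith [h2]
  have e5 := aux_log_np1 n hn
  have hcoef : 3 * Real.log B + 2 * Real.log 2 - 3 * Real.log 3 ≤ 3 / 5 := by
    have := aux_QII_num
    linarith
  have hcoefn := mul_le_mul_of_nonneg_left hcoef (by positivity : (0:ℝ) ≤ (n:ℝ))
  have hlog2 : (0:ℝ) ≤ Real.log 2 := Real.log_nonneg (by norm_num)
  have hlogn : (0:ℝ) ≤ Real.log n := Real.log_nonneg hn1
  nlinarith [e4, e5, hcoefn]

open Nat Real Finset in
lemma aux_Q (L m ν : ℝ) (n : ℕ) (hn : 1 ≤ n) (hν : 0 < ν) (hw : 1 < ν * n)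
    (hlogu : Real.log (1 + ν) = L - m) (hlogν : Real.log ν = -m) :
    (((n : ℝ) + 1) * Real.log (n + 1) - n) + L * ((1 + ν) * n + 1)
      - (((1 + ν) * n) * Real.log ((1 + ν) * n)
          - (ν * n - 1) * Real.log (ν * n - 1) - (n + 1))
      - (n + 1) * m ≤ L + 3 := by
  have hn1 : (1:ℝ) ≤ n := by exact_mod_cast hn
  have hnpos : (0:ℝ) < n := by linarith
  have hlogn : (0:ℝ) ≤ Real.log n := Real.log_nonneg hn1
  have hwpos : (0:ℝ) < ν * n - 1 := by linarith
  have hS : Real.log ((1 + ν) * n) = Real.log (1 + ν) + Real.log n :=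
    Real.log_mul (by positivity) (by positivity)
  have hνn : Real.log (ν * n) = Real.log ν + Real.log n :=
    Real.log_mul (by positivity) (by positivity)
  have e4 : (ν * n - 1) * Real.log (ν * n - 1)
      ≤ ν * n * Real.log n - ν * n * m - Real.log n + m := by
    have h1 : Real.log (ν * n - 1) ≤ Real.log (ν * n) :=
      Real.log_le_log hwpos (by linarith)
    rw [hνn, hlogν] at h1
    have h2 := mul_le_mul_of_nonneg_left h1 hwpos.le
    nlinarith [h2]
  have e5 : ((n : ℝ) + 1) * Real.log ((n:ℝ) + 1) ≤ n * Real.log n + Real.log n + 2 := by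
    have h1 : Real.log ((n:ℝ) + 1) ≤ Real.log n + 1 / n := by
      have h2 : Real.log ((n:ℝ) + 1) = Real.log n + Real.log (((n:ℝ) + 1) / n) := by
        rw [← Real.log_mul (by positivity) (by positivity)]
        congr 1
        field_simp
      rw [h2]
      have h3 : Real.log (((n:ℝ) + 1) / n) ≤ ((n:ℝ) + 1) / n - 1 :=
        Real.log_le_sub_one_of_pos (by positivity)
      have h4 : ((n:ℝ) + 1) / n - 1 = 1 / n := by field_simp; ring
      linarith [h3, h4.le]
    have h5 := mul_le_mul_of_nonneg_left h1 (by positivity : (0:ℝ) ≤ (n:ℝ) + 1)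
    have h6 : ((n:ℝ) + 1) * (Real.log n + 1 / n) = n * Real.log n + Real.log n + ((n:ℝ)+1)/n := by
      field_simp
    have h7 : ((n:ℝ) + 1) / n ≤ 2 := by
      rw [div_le_iff₀ hnpos]
      linarith
    nlinarith [h5]
  rw [hS, hlogu]
  nlinarith [e4, e5]

open Nat Real in
lemma aux_eventually (K T Cs : ℝ) (hT : 0 < T) (hK : 0 ≤ K) (h : T < Cs) :
    ∃ N : ℕ, ∀ n : ℕ, N ≤ n → K * (n + 1) * T ^ n ≤ Cs ^ n := by
  have hr : 1 < Cs / T := (one_lt_div hT).mpr h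
  have ho := isLittleO_pow_const_const_pow_of_one_lt (R := ℝ) 1 hr
  have hb := ho.bound (c := 1 / (2 * K + 2)) (by positivity)
  rw [Filter.eventually_atTop] at hb
  obtain ⟨N, hN⟩ := hb
  refine ⟨max N 1, fun n hn => ?_⟩
  have hn1 : 1 ≤ n := le_trans (le_max_right _ _) hn
  have h1 := hN n (le_trans (le_max_left _ _) hn)
  simp only [norm_pow, Real.norm_natCast, pow_one] at h1
  have h2 : ‖Cs / T‖ = Cs / T := by
    rw [Real.norm_eq_abs, abs_of_pos (by positivity)]
  rw [h2] at h1
  have h3 : ((n : ℝ) + 1) ≤ 2 * n := by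
    have : (1:ℝ) ≤ n := by exact_mod_cast hn1
    linarith
  have h4 : K * ((n:ℝ) + 1) ≤ (Cs / T) ^ n := by
    calc K * ((n:ℝ) + 1) ≤ K * (2 * n) := by nlinarith
      _ = (2 * K) * n := by ring
      _ ≤ (2 * K) * (1 / (2 * K + 2) * (Cs / T) ^ n) := by
          apply mul_le_mul_of_nonneg_left h1 (by positivity)
      _ ≤ (Cs / T) ^ n := by
          have h5 : (0:ℝ) < (Cs / T) ^ n := by positivity
          have h6 : (2 * K) * (1 / (2 * K + 2)) ≤ 1 := by
            rw [mul_one_div, div_le_one (by positivity)]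
            linarith
          nlinarith [h5, h6]
  have h7 : (Cs / T) ^ n * T ^ n = Cs ^ n := by
    rw [← mul_pow]
    congr 1
    field_simp
  calc K * ((n:ℝ) + 1) * T ^ n ≤ (Cs / T) ^ n * T ^ n := by
        apply mul_le_mul_of_nonneg_right h4 (by positivity)
    _ = Cs ^ n := h7

open Nat Real Finset Metric in
lemma aux_master (g : ℂ → ℂ) (hg : DifferentiableOn ℂ g {z : ℂ | -2 < z.re})
    (L mh Qb : ℝ) (hL : 0 ≤ L) (hm : 1 / 4 ≤ mh) (hQb : 0 ≤ Qb)
    (hgb : ∀ z : ℂ, -2 < z.re →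
      ‖g z‖ ≤ Real.exp ((L / 2) * (z.re + ‖z‖)))
    (n : ℕ) (U : ℝ) (hU : (n : ℝ) + 1 < U)
    (hQ : (((n : ℝ) + 1) * Real.log (n + 1) - n) + L * (U + 1)
        - (U * Real.log U - (U - (n + 1)) * Real.log (U - (n + 1)) - (n + 1)) - (n + 1) * mh
        ≤ Qb) :
    ‖cfwdD^[n] g 0‖ ≤ ((U + 1) / 2) * Real.exp ((n + 1) * mh + Qb) := by
  have hn0 : (0:ℝ) ≤ n := Nat.cast_nonneg n
  have hU1 : (1:ℝ) < U := by linarith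
  set c₀ : ℝ := (U - 1) / 2 with hc₀
  set R : ℝ := (U + 1) / 2 with hR_def
  have hR : 0 < R := by rw [hR_def]; linarith
  have hre_ball : ∀ z : ℂ, z ∈ Metric.closedBall ((c₀ : ℝ) : ℂ) R → -1 ≤ z.re := by
    intro z hzb
    rw [Metric.mem_closedBall, Complex.dist_eq] at hzb
    have h1 : |(z - ((c₀ : ℝ) : ℂ)).re| ≤ ‖z - ((c₀ : ℝ) : ℂ)‖ :=
      Complex.abs_re_le_norm _
    simp only [Complex.sub_re, Complex.ofReal_re] at h1
    have h2 : |z.re - c₀| ≤ R := le_trans h1 hzb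
    have h3 := abs_le.mp h2
    rw [hc₀, hR_def] at h3
    linarith [h3.1]
  have hsub : Metric.closedBall ((c₀ : ℝ) : ℂ) R ⊆ {z : ℂ | -2 < z.re} := by
    intro z hzb
    have := hre_ball z hzb
    simp only [Set.mem_setOf_eq]
    linarith
  have hj : ∀ j ∈ Finset.range (n + 1), ((j : ℕ) : ℂ) ∈ Metric.ball ((c₀ : ℝ) : ℂ) R := by
    intro j hjm
    have hjn : (j : ℝ) ≤ n := by exact_mod_cast Nat.lt_succ_iff.mp (Finset.mem_range.mp hjm)
    rw [Metric.mem_ball, Complex.dist_eq]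
    have h1 : ((j : ℕ) : ℂ) - ((c₀ : ℝ) : ℂ) = (((j : ℝ) - c₀ : ℝ) : ℂ) := by push_cast; ring
    rw [h1, Complex.norm_real, Real.norm_eq_abs]
    rw [abs_lt]
    constructor
    · rw [hc₀, hR_def]
      have : (0:ℝ) ≤ (j:ℝ) := Nat.cast_nonneg j
      linarith
    · rw [hc₀, hR_def]
      linarith
  -- pointwise bound on the sphere
  set M : ℝ := Real.exp ((n + 1) * mh + Qb) with hM_def
  have hM : ∀ z ∈ Metric.sphere ((c₀ : ℝ) : ℂ) R,
      (n ! : ℝ) * ‖g z‖ ≤ M * ∏ j ∈ Finset.range (n + 1), ‖z - j‖ := by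
    intro z hzs
    have hzre : -1 ≤ z.re := hre_ball z (Metric.sphere_subset_closedBall hzs)
    have hzre2 : -2 < z.re := by linarith
    obtain ⟨Λ, hΛ0, hΛ1, hcore⟩ := aux_core L U mh n hL hm hU z hzs
    have hΛQ : Λ * ((((n : ℝ) + 1) * Real.log (n + 1) - n) + L * (U + 1)
        - (U * Real.log U - (U - (n + 1)) * Real.log (U - (n + 1)) - (n + 1)) - (n + 1) * mh)
        ≤ Qb := by
      rcases le_or_gt ((((n : ℝ) + 1) * Real.log (n + 1) - n) + L * (U + 1)
        - (U * Real.log U - (U - (n + 1)) * Real.log (U - (n + 1)) - (n + 1)) - (n + 1) * mh) 0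
        with h | h
      · nlinarith
      · nlinarith
    have htotal : Real.log (n !) + (L / 2) * (z.re + ‖z‖)
        ≤ (n + 1) * mh + Qb + ∑ j ∈ Finset.range (n + 1), Real.log (‖z - j‖) := by
      linarith [hcore, hΛQ]
    -- positivity of the node distances
    have hne : ∀ j ∈ Finset.range (n + 1), 0 < ‖z - j‖ := by
      intro j hjm
      have hjb := hj j hjm
      have hzj : z ≠ (j : ℂ) := by
        intro hcon
        rw [← hcon] at hjb
        rw [Metric.mem_ball, Metric.mem_sphere.mp hzs] at hjb
        exact lt_irrefl _ hjb
      exact norm_pos_iff.mpr (sub_ne_zero.mpr hzj)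
    have hexp_sum : Real.exp (∑ j ∈ Finset.range (n + 1), Real.log (‖z - j‖))
        = ∏ j ∈ Finset.range (n + 1), ‖z - j‖ := by
      rw [Real.exp_sum]
      exact Finset.prod_congr rfl fun j hjm => Real.exp_log (hne j hjm)
    have hfact_pos : (0:ℝ) < (n ! : ℝ) := by exact_mod_cast Nat.factorial_pos n
    calc (n ! : ℝ) * ‖g z‖
        ≤ (n ! : ℝ) * Real.exp ((L / 2) * (z.re + ‖z‖)) := by
          apply mul_le_mul_of_nonneg_left (hgb z hzre2) hfact_pos.le
      _ = Real.exp (Real.log (n !) + (L / 2) * (z.re + ‖z‖)) := by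
          rw [Real.exp_add, Real.exp_log hfact_pos]
      _ ≤ Real.exp ((n + 1) * mh + Qb + ∑ j ∈ Finset.range (n + 1),
            Real.log (‖z - j‖)) := Real.exp_le_exp.mpr htotal
      _ = M * ∏ j ∈ Finset.range (n + 1), ‖z - j‖ := by
          rw [Real.exp_add, hexp_sum, hM_def]
  exact aux_rep g c₀ R hR hg hsub n hj M hM

open Nat Real Finset in
theorem stmt17 (k : ℕ) (hk : 1 ≤ k) (g : ℂ → ℂ)
    (hg : DifferentiableOn ℂ g {z : ℂ | -2 < z.re})
    (ε C : ℝ) (hε : 0 < ε) (hε1 : ε < 1) (hC : 0 < C)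
    (hbd : ∀ z : ℂ, -2 < z.re → ‖g z‖ ≤ C ^ (z.re + ε * ‖z‖))
    (hCk : C ^ ((1 : ℝ) + ε) < Real.exp (harmonic' k) + 1) :
    ∃ Cstar : ℝ, 0 < Cstar ∧ Cstar < Real.exp (harmonic' k) ∧
      ∃ N : ℕ, ∀ n : ℕ, N ≤ n → ‖cfwdD^[n] g 0‖ ≤ Cstar ^ n := by
  set E : ℝ := Real.exp (harmonic' k) with hE_def
  have hh1 : (1:ℝ) ≤ harmonic' k := by
    rw [harmonic']
    have h1 : (1:ℕ) ∈ Finset.Icc 1 k := Finset.mem_Icc.mpr ⟨le_refl 1, hk⟩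
    have h2 := Finset.single_le_sum (f := fun j : ℕ => 1 / (j:ℝ))
      (fun i _ => by positivity) h1
    simpa using h2
  have hE1 : Real.exp 1 ≤ E := by
    rw [hE_def]
    exact Real.exp_le_exp.mpr hh1
  have hE27 : (2.7182818283 : ℝ) < E := lt_of_lt_of_le Real.exp_one_gt_d9 hE1
  set B : ℝ := C ^ ((1:ℝ) + ε) with hB_def
  have hB_pos : 0 < B := Real.rpow_pos_of_pos hC _
  have hBE : B < E + 1 := hCk
  rcases le_or_gt B (171/100) with h171 | h171
  · -- Branch I : trivial binomial bound
    refine ⟨271/100, by norm_num, by linarith, 0, fun n _ => ?_⟩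
    have habsj : ∀ j : ℕ, ‖g j‖ ≤ B ^ j := by
      intro j
      have hjre : (-2:ℝ) < ((j:ℕ):ℂ).re := by
        rw [Complex.natCast_re]
        have : (0:ℝ) ≤ j := Nat.cast_nonneg j
        linarith
      have h1 := hbd j hjre
      rw [Complex.natCast_re, Complex.norm_natCast] at h1
      have h2 : (j:ℝ) + ε * j = ((1:ℝ) + ε) * j := by ring
      rw [h2] at h1
      rw [Real.rpow_mul hC.le, Real.rpow_natCast] at h1
      exact h1
    rw [aux_sum_formula]
    calc ‖∑ j ∈ Finset.range (n + 1),
          ((-1 : ℂ)) ^ (n - j) * (n.choose j : ℂ) * g j‖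
        ≤ ∑ j ∈ Finset.range (n + 1),
          ‖((-1 : ℂ)) ^ (n - j) * (n.choose j : ℂ) * g j‖ :=
          norm_sum_le _ _
      _ ≤ ∑ j ∈ Finset.range (n + 1), (n.choose j : ℝ) * B ^ j := by
          apply Finset.sum_le_sum
          intro j hjm
          rw [norm_mul, norm_mul, norm_pow]
          simp only [norm_neg, norm_one, one_pow, one_mul, Complex.norm_natCast]
          exact mul_le_mul_of_nonneg_left (habsj j) (Nat.cast_nonneg _)
      _ = (B + 1) ^ n := by
          rw [add_pow B 1 n]
          refine Finset.sum_congr rfl fun j hjm => ?_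
          rw [one_pow]
          ring
      _ ≤ (271/100 : ℝ) ^ n := by
          apply pow_le_pow_left₀ (by linarith)
          linarith
  · -- complex-analytic branches
    have hB1 : (1:ℝ) < B := by linarith
    have hC1 : (1:ℝ) ≤ C := by
      by_contra hlt
      push_neg at hlt
      have : B < 1 := Real.rpow_lt_one hC.le hlt (by linarith)
      linarith
    set L : ℝ := Real.log B with hL_def
    have hL0 : 0 ≤ L := Real.log_nonneg hB1.le
    have hLC : L = ((1:ℝ) + ε) * Real.log C := by
      rw [hL_def, hB_def, Real.log_rpow hC]
    have hlogC0 : 0 ≤ Real.log C := Real.log_nonneg hC1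
    have hgb : ∀ z : ℂ, -2 < z.re →
        ‖g z‖ ≤ Real.exp ((L / 2) * (z.re + ‖z‖)) := by
      intro z hz
      have h1 := hbd z hz
      rw [Real.rpow_def_of_pos hC] at h1
      refine h1.trans (Real.exp_le_exp.mpr ?_)
      have hre := Complex.re_le_norm z
      have hkey : 0 ≤ (Real.log C) * ((1 - ε) * (‖z‖ - z.re)) :=
        mul_nonneg hlogC0 (mul_nonneg (by linarith) (by linarith))
      rw [hLC]
      nlinarith [hkey]
    rcases le_or_gt B (23/10) with h23 | h23
    · -- Branch II
      have hT2 : Real.exp (3/5) < 2 := by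
        have hlog2 := Real.log_two_gt_d9
        have h1 : Real.exp (3/5) < Real.exp (Real.log 2) :=
          Real.exp_lt_exp.mpr (by linarith)
        rwa [Real.exp_log (by norm_num : (0:ℝ) < 2)] at h1
      obtain ⟨N1, hN1⟩ := aux_eventually (2 * Real.exp (L + 13/4)) (Real.exp (3/5)) 2
        (Real.exp_pos _) (by positivity) hT2
      refine ⟨2, by norm_num, by linarith, max N1 1, fun n hn => ?_⟩
      have hn1 : 1 ≤ n := le_trans (le_max_right _ _) hn
      have hn1' : (1:ℝ) ≤ n := by exact_mod_cast hn1
      have hQ := aux_QII B n (by linarith) h23 hn1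
      have hmaster := aux_master g hg L (1/4) ((7/20)*n + L + 3) hL0 (le_refl _)
        (by positivity) hgb n (3*(n:ℝ)) (by linarith) (by exact_mod_cast hQ)
      have hRbound : (3*(n:ℝ) + 1)/2 ≤ 2*((n:ℝ)+1) := by linarith
      have hexp_eq : ((n:ℝ)+1)*(1/4) + ((7/20)*n + L + 3) = (n:ℕ)*(3/5) + (L + 13/4) := by
        push_cast
        ring
      have hsplit : Real.exp ((n:ℕ)*(3/5) + (L + 13/4))
          = Real.exp (3/5)^(n:ℕ) * Real.exp (L + 13/4) := by
        rw [Real.exp_add, Real.exp_nat_mul]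
      calc ‖cfwdD^[n] g 0‖
          ≤ ((3*(n:ℝ) + 1)/2) * Real.exp (((n:ℝ)+1)*(1/4) + ((7/20)*n + L + 3)) := hmaster
        _ = ((3*(n:ℝ) + 1)/2) * (Real.exp (3/5)^(n:ℕ) * Real.exp (L + 13/4)) := by
            rw [hexp_eq, hsplit]
        _ ≤ (2*((n:ℝ)+1)) * (Real.exp (3/5)^(n:ℕ) * Real.exp (L + 13/4)) := by
            apply mul_le_mul_of_nonneg_right hRbound (by positivity)
        _ = (2 * Real.exp (L + 13/4)) * ((n:ℝ)+1) * Real.exp (3/5)^(n:ℕ) := by ring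
        _ ≤ 2 ^ n := hN1 n (le_trans (le_max_left _ _) hn)
    · -- Branch III
      set m : ℝ := Real.log (B - 1) with hm_def
      have hB13 : (13/10 : ℝ) < B - 1 := by linarith
      have hexp14 : Real.exp (1/4) ≤ 13/10 := by
        have h4 : (Real.exp (1/4))^(4:ℕ) = Real.exp 1 := by
          rw [← Real.exp_nat_mul]
          norm_num
        have h5 : (Real.exp (1/4))^(4:ℕ) ≤ (13/10:ℝ)^(4:ℕ) := by
          rw [h4]
          nlinarith [Real.exp_one_lt_d9]
        exact le_of_pow_le_pow_left₀ (by norm_num) (by norm_num) h5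
      have hm14 : 1/4 ≤ m := by
        rw [hm_def]
        calc (1/4 : ℝ) = Real.log (Real.exp (1/4)) := (Real.log_exp _).symm
          _ ≤ Real.log (13/10) := Real.log_le_log (Real.exp_pos _) hexp14
          _ ≤ Real.log (B - 1) := Real.log_le_log (by norm_num) (by linarith)
      set ν : ℝ := 1/(B-1) with hν_def
      have hν : 0 < ν := by rw [hν_def]; positivity
      have hν1 : ν < 1 := by
        rw [hν_def]
        rw [div_lt_one (by linarith)]
        linarith
      have hlogu : Real.log (1 + ν) = L - m := by
        have h1 : (1:ℝ) + ν = B/(B-1) := by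
          rw [hν_def]
          field_simp
          ring
        rw [h1, Real.log_div (by linarith) (by linarith), hL_def, hm_def]
      have hlogν : Real.log ν = -m := by
        rw [hν_def, hm_def, one_div, Real.log_inv]
      have hexpm : Real.exp m = B - 1 := Real.exp_log (by linarith)
      set Cstar : ℝ := (Real.exp m + E)/2 with hCs_def
      have hCs1 : Real.exp m < Cstar := by
        rw [hCs_def, hexpm]
        linarith
      have hCs2 : Cstar < E := by
        rw [hCs_def, hexpm]
        linarith
      have hCs0 : 0 < Cstar := by
        rw [hCs_def]
        positivity
      obtain ⟨N1, hN1⟩ := aux_eventually (Real.exp (m + L + 3)) (Real.exp m) Cstar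
        (Real.exp_pos _) (Real.exp_pos _).le hCs1
      refine ⟨Cstar, hCs0, hCs2, max N1 (⌈B⌉₊ + 1), fun n hn => ?_⟩
      have hnB' : (⌈B⌉₊ + 1 : ℕ) ≤ n := le_trans (le_max_right _ _) hn
      have hnB : B - 1 < n := by
        have h1 : B ≤ ⌈B⌉₊ := Nat.le_ceil B
        have h2 : ((⌈B⌉₊ + 1 : ℕ) : ℝ) ≤ n := by exact_mod_cast hnB'
        push_cast at h2
        linarith
      have hn1 : 1 ≤ n := by
        have : 1 ≤ ⌈B⌉₊ + 1 := by omega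
        omega
      have hn1' : (1:ℝ) ≤ n := by exact_mod_cast hn1
      have hw : 1 < ν * n := by
        rw [hν_def, one_div, inv_mul_eq_div, lt_div_iff₀ (by linarith)]
        linarith
      have hU : (n:ℝ) + 1 < (1 + ν)*n := by nlinarith
      have hQ := aux_Q L m ν n hn1 hν hw hlogu hlogν
      have harg : (1 + ν)*(n:ℝ) - ((n:ℝ)+1) = ν*n - 1 := by ring
      have hQ' : (((n : ℝ) + 1) * Real.log (n + 1) - n) + L * ((1 + ν)*n + 1)
          - (((1 + ν)*n) * Real.log ((1 + ν)*n)
              - ((1 + ν)*n - ((n:ℝ)+1)) * Real.log ((1 + ν)*n - ((n:ℝ)+1)) - ((n:ℝ)+1))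
          - ((n:ℝ)+1) * m ≤ L + 3 := by
        rw [harg]
        exact hQ
      have hmaster := aux_master g hg L m (L + 3) hL0 hm14 (by linarith) hgb n
        ((1 + ν)*n) hU hQ'
      have hRbound : ((1 + ν)*(n:ℝ) + 1)/2 ≤ (n:ℝ) + 1 := by nlinarith
      have hsplit : Real.exp (((n:ℝ)+1)*m + (L + 3))
          = Real.exp (m + L + 3) * Real.exp m ^ (n:ℕ) := by
        rw [← Real.exp_nat_mul, ← Real.exp_add]
        congr 1
        ring
      calc ‖cfwdD^[n] g 0‖
          ≤ (((1 + ν)*(n:ℝ) + 1)/2) * Real.exp (((n:ℝ)+1)*m + (L + 3)) := hmaster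
        _ ≤ ((n:ℝ) + 1) * Real.exp (((n:ℝ)+1)*m + (L + 3)) := by
            apply mul_le_mul_of_nonneg_right hRbound (by positivity)
        _ = Real.exp (m + L + 3) * ((n:ℝ)+1) * Real.exp m ^ (n:ℕ) := by
            rw [hsplit]
            ring
        _ ≤ Cstar ^ n := hN1 n (le_trans (le_max_left _ _) hn)
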